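/- Unbiasedness of the modified G-estimating equation when the treatment-assignment model is correct: Let H* : Ω → ℝ^m be measurable, A* a treatment indicator, and Y integrable. Suppose there are a Borel function ν* : ℝ^m → ℝ with ν*(H*) integrable, a bounded Borel function C* : ℝ^m → ℝ, and a bounded σ(H*, A*)-measurable random variable Π such that E[Y | σ(H*, A*)] = ν*(H*) + Π·C*(H*) μ-a.e. Let p : ℝ^m → ℝ be Borel with p(H*) = E[A* | σ(H*)] μ-a.e. Then for all bounded Borel functions λ, θ : ℝ^m → ℝ, E[ λ(H*)·(A* − p(H*))·(Y − Π·C*(H*) + θ(H*)) ] = 0. -/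

import Mathlib

open MeasureTheory

/-- Unbiasedness of the modified G-estimating equation when the
treatment-assignment model `p(H*) = P(A* = 1 | σ(H*))` is correct. -/
theorem modified_G_estimation_unbiased
    {Ω : Type*} [MeasurableSpace Ω] (μ : Measure Ω) [IsProbabilityMeasure μ]
    {m : ℕ} (Hstar : Ω → (Fin m → ℝ)) (hHstar : Measurable Hstar)
    (Astar : Ω → ℝ) (hAstar : Measurable Astar)
    (hAstar01 : ∀ ω, Astar ω = 0 ∨ Astar ω = 1)
    (Y : Ω → ℝ) (hY : Integrable Y μ)
    (νstar Cstar : (Fin m → ℝ) → ℝ) (hνstar : Measurable νstar) (hCstar : Measurable Cstar)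
    (hνstarint : Integrable (fun ω => νstar (Hstar ω)) μ)
    (hCstarbdd : ∃ M, ∀ x, |Cstar x| ≤ M)
    (Pi : Ω → ℝ)
    (hPi : Measurable[MeasurableSpace.comap (fun ω => (Hstar ω, Astar ω)) inferInstance] Pi)
    (hPibdd : ∃ M, ∀ ω, |Pi ω| ≤ M)
    (hblip : μ[Y | MeasurableSpace.comap (fun ω => (Hstar ω, Astar ω)) inferInstance]
      =ᵐ[μ] fun ω => νstar (Hstar ω) + Pi ω * Cstar (Hstar ω))
    (p : (Fin m → ℝ) → ℝ) (hp : Measurable p)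
    (hpcorrect : (fun ω => p (Hstar ω))
      =ᵐ[μ] μ[Astar | MeasurableSpace.comap Hstar inferInstance]) :
    ∀ lam θ : (Fin m → ℝ) → ℝ, Measurable lam → Measurable θ →
      (∃ M, ∀ x, |lam x| ≤ M) → (∃ M, ∀ x, |θ x| ≤ M) →
      ∫ ω, lam (Hstar ω) * (Astar ω - p (Hstar ω))
          * (Y ω - Pi ω * Cstar (Hstar ω) + θ (Hstar ω)) ∂μ = 0 := by
  intro lam θ hlam hθ hlambdd hθbdd
  obtain ⟨Ml, hMl⟩ := hlambdd
  obtain ⟨Mt, hMt⟩ := hθbdd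
  obtain ⟨MC, hMC⟩ := hCstarbdd
  obtain ⟨MP, hMP⟩ := hPibdd
  let mΩ : MeasurableSpace Ω := inferInstance
  have hG1le : MeasurableSpace.comap Hstar inferInstance
      ≤ (inferInstance : MeasurableSpace Ω) := hHstar.comap_le
  have hG2le : MeasurableSpace.comap (fun ω => (Hstar ω, Astar ω)) inferInstance
      ≤ (inferInstance : MeasurableSpace Ω) := (hHstar.prodMk hAstar).comap_le
  set G2 : MeasurableSpace Ω :=
    MeasurableSpace.comap (fun ω => (Hstar ω, Astar ω)) inferInstance with hG2
  set G1 : MeasurableSpace Ω := MeasurableSpace.comap Hstar inferInstance with hG1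
  have hHm1 : Measurable[G1] Hstar := Measurable.of_comap_le le_rfl
  have hpairm : Measurable[G2] (fun ω => (Hstar ω, Astar ω)) := Measurable.of_comap_le le_rfl
  have hHm2 : Measurable[G2] Hstar := measurable_fst.comp hpairm
  have hAm2 : Measurable[G2] Astar := measurable_snd.comp hpairm
  -- basic bounds on Astar
  have hAabs : ∀ ω, |Astar ω| ≤ 1 := by
    intro ω; rcases hAstar01 ω with h | h <;> rw [h] <;> norm_num
  have hAint : Integrable Astar μ := by
    refine (integrable_const (1 : ℝ)).mono' hAstar.aestronglyMeasurable ?_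
    exact Filter.Eventually.of_forall fun ω => by simpa using hAabs ω
  -- a.e. bound on p ∘ Hstar
  have hpae : ∀ᵐ ω ∂μ, |p (Hstar ω)| ≤ 1 := by
    have h0 : 0 ≤ᵐ[μ] μ[Astar | G1] := by
      refine condExp_nonneg ?_
      exact Filter.Eventually.of_forall fun ω => by
        rcases hAstar01 ω with h | h <;> rw [h] <;> norm_num
    have h1 : μ[Astar | G1] ≤ᵐ[μ] fun _ => (1 : ℝ) := by
      have := condExp_mono (μ := μ) (m := G1) hAint (integrable_const (1 : ℝ))
        (Filter.Eventually.of_forall fun ω => by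
          rcases hAstar01 ω with h | h <;> rw [h] <;> norm_num)
      calc μ[Astar | G1] ≤ᵐ[μ] μ[(fun _ => (1:ℝ)) | G1] := this
        _ = fun _ => (1 : ℝ) := condExp_const hG1le (1 : ℝ)
    filter_upwards [hpcorrect, h0, h1] with ω heq h0' h1'
    rw [heq, abs_le]; exact ⟨by simp at h0'; linarith, h1'⟩
  -- the G2-measurable factor
  set g1 : Ω → ℝ := fun ω => lam (Hstar ω) * (Astar ω - p (Hstar ω)) with hg1def
  have hg1m : Measurable[G2] g1 := ((hlam.comp hHm2).mul (hAm2.sub (hp.comp hHm2)))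
  have hg1sm : StronglyMeasurable[G2] g1 := hg1m.stronglyMeasurable
  have hg1aesm : AEStronglyMeasurable[mΩ] g1 μ := (hg1sm.mono hG2le).aestronglyMeasurable
  have hg1bdd : ∀ᵐ ω ∂μ, ‖g1 ω‖ ≤ Ml * 2 := by
    filter_upwards [hpae] with ω hpω
    have h1 : |lam (Hstar ω)| ≤ Ml := hMl _
    have h2 : |Astar ω - p (Hstar ω)| ≤ 2 := by
      have := hAabs ω
      have := abs_sub (Astar ω) (p (Hstar ω))
      calc |Astar ω - p (Hstar ω)| ≤ |Astar ω| + |p (Hstar ω)| := abs_sub _ _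
        _ ≤ 1 + 1 := add_le_add (hAabs ω) hpω
        _ = 2 := by norm_num
    calc ‖g1 ω‖ = |lam (Hstar ω)| * |Astar ω - p (Hstar ω)| := by
          simp [hg1def, abs_mul, Real.norm_eq_abs]
      _ ≤ Ml * 2 := mul_le_mul h1 h2 (abs_nonneg _) ((abs_nonneg _).trans h1)
  -- pieces
  set c : Ω → ℝ := fun ω => θ (Hstar ω) - Pi ω * Cstar (Hstar ω) with hcdef
  have hPiaesm : AEStronglyMeasurable[mΩ] Pi μ :=
    (hPi.stronglyMeasurable.mono hG2le).aestronglyMeasurable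
  have hcint : Integrable c μ := by
    refine (integrable_const (Mt + MP * MC) ).mono'
      (((hθ.comp hHstar).aestronglyMeasurable).sub
        (hPiaesm.mul (hCstar.comp hHstar).aestronglyMeasurable)) ?_
    refine Filter.Eventually.of_forall fun ω => ?_
    have h1 : |θ (Hstar ω)| ≤ Mt := hMt _
    have h2 : |Pi ω * Cstar (Hstar ω)| ≤ MP * MC := by
      rw [abs_mul]
      exact mul_le_mul (hMP ω) (hMC _) (abs_nonneg _) ((abs_nonneg _).trans (hMP ω))
    calc ‖c ω‖ ≤ |θ (Hstar ω)| + |Pi ω * Cstar (Hstar ω)| := by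
          simpa [hcdef, Real.norm_eq_abs] using abs_sub (θ (Hstar ω)) (Pi ω * Cstar (Hstar ω))
      _ ≤ Mt + MP * MC := add_le_add h1 h2
  have key1 : Integrable (fun ω => g1 ω * Y ω) μ := hY.bdd_mul hg1aesm hg1bdd
  have key2 : Integrable (fun ω => g1 ω * c ω) μ := hcint.bdd_mul hg1aesm hg1bdd
  -- split the integral
  have hsplit : ∫ ω, lam (Hstar ω) * (Astar ω - p (Hstar ω))
      * (Y ω - Pi ω * Cstar (Hstar ω) + θ (Hstar ω)) ∂μ
      = (∫ ω, g1 ω * Y ω ∂μ) + ∫ ω, g1 ω * c ω ∂μ := by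
    rw [← integral_add key1 key2]
    exact integral_congr_ae (Filter.Eventually.of_forall fun ω => by
      simp only [hg1def, hcdef]; ring)
  -- step A: condition on G2
  have hYblip : ∫ ω, g1 ω * Y ω ∂μ
      = ∫ ω, g1 ω * (νstar (Hstar ω) + Pi ω * Cstar (Hstar ω)) ∂μ := by
    have hpull := condExp_mul_of_stronglyMeasurable_left (μ := μ) hg1sm key1 hY
    calc ∫ ω, g1 ω * Y ω ∂μ = ∫ ω, (μ[g1 * Y | G2]) ω ∂μ := (integral_condExp hG2le).symm
      _ = ∫ ω, g1 ω * (μ[Y | G2]) ω ∂μ := integral_congr_ae hpull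
      _ = ∫ ω, g1 ω * (νstar (Hstar ω) + Pi ω * Cstar (Hstar ω)) ∂μ := by
          refine integral_congr_ae ?_
          filter_upwards [hblip] with ω hω
          rw [hω]
  rw [hsplit, hYblip]
  -- combine: g1 * (ν + ΠC) + g1 * c = g1 * (ν + θ)
  have hnuint : Integrable (fun ω => g1 ω * (νstar (Hstar ω) + Pi ω * Cstar (Hstar ω))) μ := by
    refine Integrable.bdd_mul ?_ hg1aesm hg1bdd
    refine hνstarint.add ?_
    refine (integrable_const (MP * MC)).mono'
      (hPiaesm.mul (hCstar.comp hHstar).aestronglyMeasurable) ?_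
    refine Filter.Eventually.of_forall fun ω => ?_
    rw [Real.norm_eq_abs, abs_mul]
    exact mul_le_mul (hMP ω) (hMC _) (abs_nonneg _) ((abs_nonneg _).trans (hMP ω))
  rw [← integral_add hnuint key2]
  -- now reduce to the G1 step
  set f : (Fin m → ℝ) → ℝ := fun x => lam x * (νstar x + θ x) with hfdef
  have hcomb : ∫ ω, (g1 ω * (νstar (Hstar ω) + Pi ω * Cstar (Hstar ω)) + g1 ω * c ω) ∂μ
      = ∫ ω, f (Hstar ω) * (Astar ω - p (Hstar ω)) ∂μ := by
    refine integral_congr_ae (Filter.Eventually.of_forall fun ω => ?_)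
    simp only [hg1def, hcdef, hfdef]; ring
  rw [hcomb]
  -- integrability of f ∘ Hstar and its products
  have hfint : Integrable (fun ω => f (Hstar ω)) μ := by
    have : Integrable (fun ω => νstar (Hstar ω) + θ (Hstar ω)) μ := by
      refine hνstarint.add ?_
      refine (integrable_const Mt).mono' (hθ.comp hHstar).aestronglyMeasurable ?_
      exact Filter.Eventually.of_forall fun ω => by simpa [Real.norm_eq_abs] using hMt _
    refine this.bdd_mul (c := Ml) ((hlam.comp hHstar)).aestronglyMeasurable ?_
    exact Filter.Eventually.of_forall fun ω => by simpa [Real.norm_eq_abs] using hMl _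
  have hfm1 : StronglyMeasurable[G1] (fun ω => f (Hstar ω)) :=
    ((hlam.comp hHm1).mul ((hνstar.comp hHm1).add (hθ.comp hHm1))).stronglyMeasurable
  have hfA : Integrable (fun ω => f (Hstar ω) * Astar ω) μ := by
    have h := hfint.bdd_mul (c := 1) hAstar.aestronglyMeasurable
      (Filter.Eventually.of_forall fun ω => by simpa [Real.norm_eq_abs] using hAabs ω)
    exact h.congr (Filter.Eventually.of_forall fun ω => mul_comm _ _)
  have hfp : Integrable (fun ω => f (Hstar ω) * p (Hstar ω)) μ := by
    have h := hfint.bdd_mul (c := 1) (hp.comp hHstar).aestronglyMeasurable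
      (by filter_upwards [hpae] with ω h using by simpa [Real.norm_eq_abs] using h)
    exact h.congr (Filter.Eventually.of_forall fun ω => mul_comm _ _)
  have hexp : ∫ ω, f (Hstar ω) * (Astar ω - p (Hstar ω)) ∂μ
      = (∫ ω, f (Hstar ω) * Astar ω ∂μ) - ∫ ω, f (Hstar ω) * p (Hstar ω) ∂μ := by
    rw [← integral_sub hfA hfp]
    exact integral_congr_ae (Filter.Eventually.of_forall fun ω => by ring)
  rw [hexp]
  -- step B: condition on G1
  have hB : ∫ ω, f (Hstar ω) * Astar ω ∂μ = ∫ ω, f (Hstar ω) * p (Hstar ω) ∂μ := by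
    have hpull := condExp_mul_of_stronglyMeasurable_left (μ := μ) hfm1 hfA hAint
    calc ∫ ω, f (Hstar ω) * Astar ω ∂μ
        = ∫ ω, (μ[(fun ω => f (Hstar ω)) * Astar | G1]) ω ∂μ := (integral_condExp hG1le).symm
      _ = ∫ ω, f (Hstar ω) * (μ[Astar | G1]) ω ∂μ := integral_congr_ae hpull
      _ = ∫ ω, f (Hstar ω) * p (Hstar ω) ∂μ := by
          refine integral_congr_ae ?_
          filter_upwards [hpcorrect] with ω hω
          rw [hω]
  rw [hB, sub_self]
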